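/- There exists a constant C ∈ (0, ∞) such that for every integer N ≥ 2, every τ ∈ (0, 1), and every t > 0, one has Σ_{j=1}^{N−1} ∫_0^t (e^{−λ_j^N (t−s)} − e^{−λ_j^N (t − ℓ_τ(s))})² ds ≤ C √τ, where λ_j^N = 4N² sin²(jπ/(2N)). -/

import Mathlib

noncomputable def leftGrid (τ s : ℝ) : ℝ := τ * ⌊s / τ⌋₊

open Real intervalIntegral MeasureTheory Finset

lemma leftGrid_le {τ s : ℝ} (hτ : 0 < τ) (hs : 0 ≤ s) : leftGrid τ s ≤ s := by
  have h := Nat.floor_le (a := s / τ) (by positivity)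
  have := (mul_le_mul_of_nonneg_left h hτ.le)
  simpa [leftGrid, mul_div_cancel₀, hτ.ne'] using this.trans_eq (by field_simp)

lemma sub_leftGrid_le {τ s : ℝ} (hτ : 0 < τ) : s - leftGrid τ s ≤ τ := by
  have h := Nat.lt_floor_add_one (s / τ)
  rw [div_lt_iff₀ hτ] at h
  unfold leftGrid
  nlinarith

lemma single_bound (lam τ t : ℝ) (hlam : 0 < lam) (hτ : 0 < τ) (ht : 0 < t) :
    ∫ s in (0:ℝ)..t, (Real.exp (-lam * (t - s)) - Real.exp (-lam * (t - leftGrid τ s))) ^ 2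
      ≤ min 1 (lam ^ 2 * τ ^ 2) / (2 * lam) := by
  set M := min 1 (lam ^ 2 * τ ^ 2) with hM
  have hM0 : 0 ≤ M := le_min zero_le_one (by positivity)
  set f : ℝ → ℝ := fun s => (Real.exp (-lam * (t - s)) - Real.exp (-lam * (t - leftGrid τ s))) ^ 2 with hf
  set g : ℝ → ℝ := fun s => M * Real.exp (-(2 * lam) * (t - s)) with hg
  have hfm : Measurable f := by
    have h1 : Measurable fun s : ℝ => leftGrid τ s := by
      unfold leftGrid
      exact (measurable_from_top.comp (Nat.measurable_floor.comp (measurable_id.div_const τ))).const_mul τ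
    fun_prop
  have hfle : ∀ s ∈ Set.Icc (0:ℝ) t, f s ≤ g s := by
    intro s hs
    obtain ⟨hs0, hst⟩ := hs
    have hl1 : leftGrid τ s ≤ s := leftGrid_le hτ hs0
    have hl2 : s - leftGrid τ s ≤ τ := sub_leftGrid_le hτ
    have key : Real.exp (-lam * (t - leftGrid τ s))
        = Real.exp (-lam * (t - s)) * Real.exp (-(lam * (s - leftGrid τ s))) := by
      rw [← Real.exp_add]; ring_nf
    have hx0 : 0 ≤ lam * (s - leftGrid τ s) := by nlinarith
    have e1 : Real.exp (-(lam * (s - leftGrid τ s))) ≤ 1 := Real.exp_le_one_iff.2 (by linarith)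
    have e2 : 1 - Real.exp (-(lam * (s - leftGrid τ s))) ≤ lam * (s - leftGrid τ s) := by
      nlinarith [Real.add_one_le_exp (-(lam * (s - leftGrid τ s)))]
    have e3 : 0 < Real.exp (-(lam * (s - leftGrid τ s))) := Real.exp_pos _
    have hfeq : f s = Real.exp (-(2*lam) * (t - s)) * (1 - Real.exp (-(lam * (s - leftGrid τ s)))) ^ 2 := by
      simp only [hf, key]
      rw [show (-(2*lam) * (t - s)) = (-lam * (t-s)) + (-lam * (t-s)) by ring, Real.exp_add]
      ring_nf
    have hsq : (1 - Real.exp (-(lam * (s - leftGrid τ s)))) ^ 2 ≤ M := by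
      refine le_min (by nlinarith) ?_
      have hxle : lam * (s - leftGrid τ s) ≤ lam * τ := by nlinarith
      nlinarith
    calc f s = Real.exp (-(2*lam) * (t - s)) * (1 - Real.exp (-(lam * (s - leftGrid τ s)))) ^ 2 := hfeq
      _ ≤ Real.exp (-(2*lam) * (t - s)) * M := mul_le_mul_of_nonneg_left hsq (Real.exp_pos _).le
      _ = g s := by rw [hg]; ring
  have hgint : IntervalIntegrable g volume 0 t := (Continuous.intervalIntegrable (by fun_prop) _ _)
  have hfint : IntervalIntegrable f volume 0 t := by
    refine hgint.mono_fun' hfm.aestronglyMeasurable ?_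
    filter_upwards [ae_restrict_mem measurableSet_uIoc] with x hx
    have hx' : x ∈ Set.Icc (0:ℝ) t := by
      rw [Set.uIoc_of_le ht.le] at hx
      exact ⟨hx.1.le, hx.2⟩
    have : ‖f x‖ = f x := by
      rw [Real.norm_eq_abs, abs_of_nonneg (by positivity)]
    rw [this]; exact hfle x hx'
  have hmono := intervalIntegral.integral_mono_on ht.le hfint hgint hfle
  have hIexp : ∫ s in (0:ℝ)..t, Real.exp (-(2*lam)*(t-s))
      = (1 - Real.exp (-(2*lam)*t)) / (2*lam) := by
    have hD : ∀ s ∈ Set.uIcc (0:ℝ) t,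
        HasDerivAt (fun u => Real.exp (-(2*lam)*(t-u)) / (2*lam)) (Real.exp (-(2*lam)*(t-s))) s := by
      intro s _
      have h1 : HasDerivAt (fun u : ℝ => -(2*lam)*(t-u)) (2*lam) s := by
        have := ((hasDerivAt_id s).const_sub t).const_mul (-(2*lam))
        simpa using this
      have h2 := (h1.exp).div_const (2*lam)
      have hne : (2*lam) ≠ 0 := by positivity
      simpa [mul_div_assoc, mul_div_cancel_left₀, hne] using h2
    rw [intervalIntegral.integral_eq_sub_of_hasDerivAt hD (Continuous.intervalIntegrable (by fun_prop) _ _)]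
    rw [show -(2*lam)*(t-t) = 0 by ring]
    simp [Real.exp_zero]
    ring
  have hgval : ∫ s in (0:ℝ)..t, g s = M * ((1 - Real.exp (-(2*lam)*t)) / (2*lam)) := by
    rw [hg, intervalIntegral.integral_const_mul, hIexp]
  refine hmono.trans ?_
  rw [hgval]
  have he : 0 ≤ Real.exp (-(2*lam)*t) := (Real.exp_pos _).le
  have h2l : 0 < 2*lam := by positivity
  calc M * ((1 - Real.exp (-(2*lam)*t)) / (2*lam)) ≤ M * (1 / (2*lam)) := by
        refine mul_le_mul_of_nonneg_left ?_ hM0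
        apply div_le_div_of_nonneg_right (by linarith) h2l.le
    _ = M / (2*lam) := by ring

lemma single_bound' (lam τ t : ℝ) (hlam : 0 < lam) (hτ : 0 < τ) (ht : 0 < t) :
    ∫ s in (0:ℝ)..t, (Real.exp (-lam * (t - s)) - Real.exp (-lam * (t - leftGrid τ s))) ^ 2
      ≤ min (τ / 2) (1 / (2 * lam)) := by
  refine (single_bound lam τ t hlam hτ ht).trans (le_min ?_ ?_)
  · have : min 1 (lam ^ 2 * τ ^ 2) ≤ lam * τ := by
      rcases le_total (lam * τ) 1 with h | h
      · refine (min_le_right _ _).trans ?_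
        nlinarith [mul_nonneg (mul_pos hlam hτ).le (by linarith : (0:ℝ) ≤ 1 - lam*τ)]
      · exact (min_le_left _ _).trans h
    rw [div_le_div_iff₀ (by positivity) (by norm_num)]
    nlinarith
  · apply div_le_div_of_nonneg_right (min_le_left _ _) (by positivity) |>.trans_eq (by ring)

lemma lam_lb (N j : ℕ) (hN : 2 ≤ N) (hj1 : 1 ≤ j) (hjN : j ≤ N - 1) :
    4 * (j:ℝ)^2 ≤ 4 * (N:ℝ)^2 * Real.sin ((j:ℝ) * π / (2*N))^2 := by
  have hN0 : (0:ℝ) < N := by exact_mod_cast Nat.pos_of_ne_zero (by omega)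
  have hjN' : (j:ℝ) ≤ (N:ℝ) := by exact_mod_cast Nat.le_of_lt_succ (by omega)
  have hj0 : (0:ℝ) < j := by exact_mod_cast hj1
  have hπ : (0:ℝ) < π := Real.pi_pos
  have hx0 : 0 ≤ (j:ℝ) * π / (2*N) := by positivity
  have hx2 : (j:ℝ) * π / (2*N) ≤ π/2 := by
    rw [div_le_div_iff₀ (by positivity) (by norm_num)]
    nlinarith
  have hsin := Real.mul_le_sin hx0 hx2
  have heq : 2/π * ((j:ℝ) * π / (2*N)) = (j:ℝ)/(N:ℝ) := by
    field_simp
  rw [heq] at hsin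
  have hjn0 : 0 ≤ (j:ℝ)/(N:ℝ) := by positivity
  have hs2 : ((j:ℝ)/(N:ℝ))^2 ≤ Real.sin ((j:ℝ) * π / (2*N))^2 := by nlinarith
  have : ((j:ℝ)/(N:ℝ))^2 * (N:ℝ)^2 = (j:ℝ)^2 := by field_simp
  nlinarith

/-- There exists a constant `C ∈ (0, ∞)` such that for every integer
`N ≥ 2`, every `τ ∈ (0, 1)` and every `t > 0`, one has
`Σ_{j=1}^{N-1} ∫_0^t (e^{-λ_j^N (t-s)} - e^{-λ_j^N (t - ℓ_τ(s))})² ds ≤ C √τ`,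
where `λ_j^N = 4N² sin² (jπ/(2N))`. -/
theorem sum_integral_exp_diff_bound :
    ∃ C : ℝ, 0 < C ∧
      ∀ (N : ℕ), 2 ≤ N → ∀ τ : ℝ, 0 < τ → τ < 1 → ∀ t : ℝ, 0 < t →
        ∑ j ∈ Finset.Icc 1 (N - 1),
            ∫ s in (0:ℝ)..t,
              (Real.exp (-(4 * (N : ℝ) ^ 2 * Real.sin ((j : ℝ) * Real.pi / (2 * N)) ^ 2) *
                    (t - s)) -
                  Real.exp (-(4 * (N : ℝ) ^ 2 *
                      Real.sin ((j : ℝ) * Real.pi / (2 * N)) ^ 2) *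
                    (t - leftGrid τ s))) ^ 2 ≤
          C * Real.sqrt τ := by
  refine ⟨2, by norm_num, ?_⟩
  intro N hN τ hτ0 hτ1 t ht
  have hsq0 : 0 < Real.sqrt τ := Real.sqrt_pos.2 hτ0
  have hss : Real.sqrt τ * Real.sqrt τ = τ := Real.mul_self_sqrt hτ0.le
  have hsle1 : Real.sqrt τ ≤ 1 := by nlinarith
  have hinv1 : 1 ≤ (Real.sqrt τ)⁻¹ := (one_le_inv₀ hsq0).2 hsle1
  set K := ⌈(Real.sqrt τ)⁻¹⌉₊ with hKdef
  have hK1 : 1 ≤ K := Nat.one_le_iff_ne_zero.2 (by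
    simp only [hKdef, ne_eq, Nat.ceil_eq_zero, not_le]
    positivity)
  have hKlo : (Real.sqrt τ)⁻¹ ≤ (K:ℝ) := Nat.le_ceil _
  have hKup : (K:ℝ) < (Real.sqrt τ)⁻¹ + 1 := Nat.ceil_lt_add_one (by positivity)
  have hinv : Real.sqrt τ * (Real.sqrt τ)⁻¹ = 1 := mul_inv_cancel₀ hsq0.ne'
  have hterm : ∀ j ∈ Finset.Icc 1 (N-1),
      (∫ s in (0:ℝ)..t,
          (Real.exp (-(4 * (N : ℝ) ^ 2 * Real.sin ((j : ℝ) * Real.pi / (2 * N)) ^ 2) * (t - s)) -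
            Real.exp (-(4 * (N : ℝ) ^ 2 * Real.sin ((j : ℝ) * Real.pi / (2 * N)) ^ 2) *
              (t - leftGrid τ s))) ^ 2)
        ≤ min (τ/2) (1/(8*(j:ℝ)^2)) := by
    intro j hj
    rw [Finset.mem_Icc] at hj
    have hj0 : (0:ℝ) < j := by exact_mod_cast hj.1
    have hlb := lam_lb N j hN hj.1 hj.2
    have hlam : 0 < 4 * (N : ℝ) ^ 2 * Real.sin ((j : ℝ) * Real.pi / (2 * N)) ^ 2 :=
      lt_of_lt_of_le (by positivity) hlb
    refine (single_bound' _ τ t hlam hτ0 ht).trans (min_le_min le_rfl ?_)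
    rw [div_le_div_iff₀ (by positivity) (by positivity)]
    nlinarith
  refine (Finset.sum_le_sum hterm).trans ?_
  have hmin0 : ∀ j : ℕ, 0 ≤ min (τ/2) (1/(8*(j:ℝ)^2)) := fun j =>
    le_min (by positivity) (by positivity)
  rw [← Finset.sum_filter_add_sum_filter_not (Finset.Icc 1 (N-1)) (fun j => j ≤ K)]
  have hA : ∑ j ∈ (Finset.Icc 1 (N-1)).filter (fun j => j ≤ K),
      min (τ/2) (1/(8*(j:ℝ)^2)) ≤ (K:ℝ) * (τ/2) := by
    calc ∑ j ∈ (Finset.Icc 1 (N-1)).filter (fun j => j ≤ K), min (τ/2) (1/(8*(j:ℝ)^2))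
        ≤ ∑ j ∈ Finset.Icc 1 K, min (τ/2) (1/(8*(j:ℝ)^2)) := by
          refine Finset.sum_le_sum_of_subset_of_nonneg ?_ (fun j _ _ => hmin0 j)
          intro j hj
          simp only [Finset.mem_filter, Finset.mem_Icc] at hj ⊢
          omega
      _ ≤ ∑ _j ∈ Finset.Icc 1 K, (τ/2) := Finset.sum_le_sum (fun j _ => min_le_left _ _)
      _ = (K:ℝ) * (τ/2) := by
          rw [Finset.sum_const, Nat.card_Icc]
          simp
  have hB : ∑ j ∈ (Finset.Icc 1 (N-1)).filter (fun j => ¬ j ≤ K),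
      min (τ/2) (1/(8*(j:ℝ)^2)) ≤ (1/8) * (2/((K:ℝ)+1)) := by
    calc ∑ j ∈ (Finset.Icc 1 (N-1)).filter (fun j => ¬ j ≤ K), min (τ/2) (1/(8*(j:ℝ)^2))
        ≤ ∑ j ∈ (Finset.Icc 1 (N-1)).filter (fun j => ¬ j ≤ K), (1/8) * (((j:ℝ))^2)⁻¹ := by
          exact Finset.sum_le_sum (fun j hj => (min_le_right _ _).trans_eq (by ring))
      _ ≤ ∑ j ∈ Finset.Ioo K N, (1/8) * (((j:ℝ))^2)⁻¹ := by
          refine Finset.sum_le_sum_of_subset_of_nonneg ?_ (fun j _ _ => by positivity)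
          intro j hj
          simp only [Finset.mem_filter, Finset.mem_Icc] at hj
          simp only [Finset.mem_Ioo]
          omega
      _ = (1/8) * ∑ j ∈ Finset.Ioo K N, (((j:ℝ))^2)⁻¹ := by rw [Finset.mul_sum]
      _ ≤ (1/8) * (2/((K:ℝ)+1)) := by
          refine mul_le_mul_of_nonneg_left ?_ (by norm_num)
          exact_mod_cast sum_Ioo_inv_sq_le (α := ℝ) K N
  have htin : τ * (Real.sqrt τ)⁻¹ = Real.sqrt τ := by
    field_simp
    exact (Real.sq_sqrt hτ0.le).symm
  have h1 : (K:ℝ) * (τ/2) ≤ Real.sqrt τ := by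
    nlinarith [mul_nonneg (by linarith : (0:ℝ) ≤ 2*(Real.sqrt τ)⁻¹ - (K:ℝ))
      (by positivity : (0:ℝ) ≤ τ/2)]
  have h2 : (1/8) * (2/((K:ℝ)+1)) ≤ Real.sqrt τ / 4 := by
    have hK1' : (0:ℝ) < (K:ℝ)+1 := by positivity
    have key : 1 ≤ Real.sqrt τ * ((K:ℝ)+1) := by
      nlinarith [mul_nonneg hsq0.le (by linarith : (0:ℝ) ≤ (K:ℝ)+1-(Real.sqrt τ)⁻¹)]
    have h3 : 2/((K:ℝ)+1) ≤ 2*Real.sqrt τ := by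
      rw [div_le_iff₀ hK1']
      nlinarith [key]
    linarith
  linarith [hA, hB, h1, h2]
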